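/- Let r and s be coprime positive integers and let m, n be integers. Let s̄ denote an inverse of s modulo r and r̄ an inverse of r modulo s. Then the Kloosterman sum satisfies S(m, n; r·s) = S(m·s̄, n·s̄; r) · S(m·r̄, n·r̄; s). -/

import Mathlib

open scoped Classical

/-- The Kloosterman sum `S(m, n; c) = Σ_{b mod c, (b,c)=1} e((m·b + n·b̄)/c)`,
written as a sum over pairs `(b, b')` of residues with `b·b' ≡ 1 (mod c)`. -/
noncomputable def kloostermanSum (m n : ℤ) (c : ℕ) : ℂ :=
  ∑ b ∈ Finset.range c, ∑ b' ∈ Finset.range c,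
    if ((b : ℤ) * (b' : ℤ)) ≡ 1 [ZMOD (c : ℤ)] then
      Complex.exp (2 * Real.pi * Complex.I * (((m * b + n * b' : ℤ) : ℂ) / (c : ℂ)))
    else 0

/-- Abbreviation for `e(a/c)`. -/
noncomputable def eFrac (a : ℤ) (c : ℕ) : ℂ :=
  Complex.exp (2 * Real.pi * Complex.I * ((a : ℂ) / (c : ℂ)))

lemma eFrac_congr {a a' : ℤ} {c : ℕ} (h : a ≡ a' [ZMOD (c : ℤ)]) :
    eFrac a c = eFrac a' c := by
  rcases eq_or_ne c 0 with rfl | hc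
  · simp [eFrac]
  obtain ⟨t, ht⟩ := (Int.modEq_iff_dvd.mp h.symm)
  have ha : a = a' + c * t := by linarith
  have hcC : (c : ℂ) ≠ 0 := Nat.cast_ne_zero.mpr hc
  have : ((a : ℂ)) / c = (a' : ℂ) / c + t := by
    field_simp [ha]; rw [ha]; push_cast; ring
  rw [eFrac, eFrac, this, mul_add, Complex.exp_add]
  have : (2 : ℂ) * Real.pi * Complex.I * (t : ℂ) = (t : ℂ) * (2 * Real.pi * Complex.I) := by ring
  rw [this, Complex.exp_int_mul_two_pi_mul_I, mul_one]

lemma eFrac_split {r s : ℕ} (hr : r ≠ 0) (hs : s ≠ 0) (a sbar rbar k : ℤ)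
    (h : (s : ℤ) * sbar + r * rbar = 1 + (r * s) * k) :
    eFrac a (r * s) = eFrac (a * sbar) r * eFrac (a * rbar) s := by
  have hrC : (r : ℂ) ≠ 0 := Nat.cast_ne_zero.mpr hr
  have hsC : (s : ℂ) ≠ 0 := Nat.cast_ne_zero.mpr hs
  have hC : (s : ℂ) * sbar + r * rbar = 1 + (r * s) * k := by
    exact_mod_cast congrArg (Int.cast : ℤ → ℂ) h
  rw [eFrac, eFrac, eFrac, ← Complex.exp_add]
  have key : 2 * (Real.pi : ℂ) * Complex.I * (((a * sbar : ℤ) : ℂ) / r)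
      + 2 * Real.pi * Complex.I * (((a * rbar : ℤ) : ℂ) / s)
      = 2 * Real.pi * Complex.I * ((a : ℂ) / ((r * s : ℕ) : ℂ))
        + ((a * k : ℤ) : ℂ) * (2 * Real.pi * Complex.I) := by
    push_cast
    field_simp
    ring_nf
    linear_combination (a : ℂ) * hC
  rw [key, Complex.exp_add, Complex.exp_int_mul_two_pi_mul_I, mul_one]



open scoped Classical

lemma sum_range_eq_sum_zmod (c : ℕ) [NeZero c] (f : ℕ → ℂ) :
    ∑ b ∈ Finset.range c, f b = ∑ x : ZMod c, f x.val := by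
  refine Finset.sum_nbij' (fun b => (b : ZMod c)) (fun x => x.val) ?_ ?_ ?_ ?_ ?_
  · intro b hb; exact Finset.mem_univ _
  · intro x _; exact Finset.mem_range.mpr (ZMod.val_lt x)
  · intro b hb; exact ZMod.val_natCast_of_lt (Finset.mem_range.mp hb)
  · intro x _; exact ZMod.natCast_rightInverse x
  · intro b hb; rw [ZMod.val_natCast_of_lt (Finset.mem_range.mp hb)]

lemma kloosterman_eq (m n : ℤ) (c : ℕ) [NeZero c] :
    kloostermanSum m n c = ∑ x : ZMod c, ∑ y : ZMod c,
      if x * y = 1 then eFrac (m * x.val + n * y.val) c else 0 := by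
  rw [kloostermanSum, sum_range_eq_sum_zmod c]
  refine Finset.sum_congr rfl fun x _ => ?_
  rw [sum_range_eq_sum_zmod c]
  refine Finset.sum_congr rfl fun y _ => ?_
  have hcond : (((x.val : ℤ)) * ((y.val : ℤ)) ≡ 1 [ZMOD (c : ℤ)]) ↔ x * y = 1 := by
    rw [← ZMod.intCast_eq_intCast_iff]
    push_cast
    rw [ZMod.natCast_val, ZMod.natCast_val, ZMod.cast_id, ZMod.cast_id]
  simp only [hcond, eFrac]
theorem kloosterman_twisted_multiplicativity (r s : ℕ) (hr : 0 < r) (hs : 0 < s)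
    (hrs : Nat.Coprime r s) (m n : ℤ) (sbar rbar : ℤ)
    (hsbar : (s : ℤ) * sbar ≡ 1 [ZMOD (r : ℤ)])
    (hrbar : (r : ℤ) * rbar ≡ 1 [ZMOD (s : ℤ)]) :
    kloostermanSum m n (r * s) =
      kloostermanSum (m * sbar) (n * sbar) r * kloostermanSum (m * rbar) (n * rbar) s := by
  haveI : NeZero r := ⟨hr.ne'⟩
  haveI : NeZero s := ⟨hs.ne'⟩
  haveI : NeZero (r * s) := ⟨(Nat.mul_pos hr hs).ne'⟩
  -- the CRT coefficient identity: s·sbar + r·rbar = 1 + rs·k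
  have hmod : (s : ℤ) * sbar + (r : ℤ) * rbar ≡ 1 [ZMOD ((r : ℤ) * (s : ℤ))] := by
    apply (Int.modEq_and_modEq_iff_modEq_mul (by simpa using hrs)).mp
    constructor
    · have h0 : (r : ℤ) * rbar ≡ 0 [ZMOD (r : ℤ)] :=
        Int.modEq_zero_iff_dvd.mpr ⟨rbar, rfl⟩
      simpa using hsbar.add h0
    · have h0 : (s : ℤ) * sbar ≡ 0 [ZMOD (s : ℤ)] :=
        Int.modEq_zero_iff_dvd.mpr ⟨sbar, rfl⟩
      simpa [add_comm] using h0.add hrbar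
  obtain ⟨k, hk⟩ := Int.ModEq.dvd hmod.symm
  have heq : (s : ℤ) * sbar + (r : ℤ) * rbar = 1 + ((r : ℤ) * (s : ℤ)) * k := by linarith
  set χ := ZMod.chineseRemainder hrs with hχ
  -- congruences for the CRT inverse
  have hcongr : ∀ p : ZMod r × ZMod s,
      (((χ.symm p).val : ℤ) ≡ (p.1.val : ℤ) [ZMOD (r : ℤ)]) ∧
      (((χ.symm p).val : ℤ) ≡ (p.2.val : ℤ) [ZMOD (s : ℤ)]) := by
    intro p
    have h2 : χ (χ.symm p) = p := χ.apply_symm_apply p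
    have h3 : (χ (χ.symm p)).1 = (ZMod.cast (χ.symm p) : ZMod r) := by
      simp [hχ, ZMod.chineseRemainder]
    have h4 : (χ (χ.symm p)).2 = (ZMod.cast (χ.symm p) : ZMod s) := by
      simp [hχ, ZMod.chineseRemainder]
    constructor
    · rw [← ZMod.intCast_eq_intCast_iff]
      push_cast
      rw [ZMod.natCast_val, ZMod.natCast_val, ZMod.cast_id, ← h3, h2]
    · rw [← ZMod.intCast_eq_intCast_iff]
      push_cast
      rw [ZMod.natCast_val, ZMod.natCast_val, ZMod.cast_id, ← h4, h2]
  rw [kloosterman_eq, kloosterman_eq, kloosterman_eq]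
  -- reindex the LHS via CRT
  have hsum : ∀ g : ZMod (r * s) → ℂ,
      ∑ x : ZMod (r * s), g x = ∑ x₁ : ZMod r, ∑ x₂ : ZMod s, g (χ.symm (x₁, x₂)) := by
    intro g
    rw [← χ.toEquiv.symm.sum_comp g, Fintype.sum_prod_type]
    rfl
  simp only [hsum]
  -- expand the RHS product into a quadruple sum, ordered x₁, x₂, y₁, y₂
  rw [Finset.sum_mul]
  refine Finset.sum_congr rfl fun x₁ _ => ?_
  conv_lhs => rw [Finset.sum_comm]
  rw [Finset.sum_mul]
  refine Finset.sum_congr rfl fun y₁ _ => ?_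
  rw [Finset.mul_sum]
  refine Finset.sum_congr rfl fun x₂ _ => ?_
  rw [Finset.mul_sum]
  refine Finset.sum_congr rfl fun y₂ _ => ?_
  -- termwise identity
  have hcond : χ.symm (x₁, x₂) * χ.symm (y₁, y₂) = 1 ↔ (x₁ * y₁ = 1 ∧ x₂ * y₂ = 1) := by
    rw [← map_mul, EmbeddingLike.map_eq_one_iff, Prod.mk_mul_mk, Prod.mk_eq_one]
  by_cases hp : x₁ * y₁ = 1 <;> by_cases hq : x₂ * y₂ = 1
  · rw [if_pos (hcond.mpr ⟨hp, hq⟩), if_pos hp, if_pos hq]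
    set b : ℤ := ((χ.symm (x₁, x₂)).val : ℤ)
    set b' : ℤ := ((χ.symm (y₁, y₂)).val : ℤ)
    rw [eFrac_split (NeZero.ne r) (NeZero.ne s) (m * b + n * b') sbar rbar k heq]
    congr 1
    · apply eFrac_congr
      have h1 : (m * b + n * b') * sbar = (m * sbar) * b + (n * sbar) * b' := by ring
      rw [h1]
      exact (((hcongr (x₁, x₂)).1).mul_left (m * sbar)).add
        (((hcongr (y₁, y₂)).1).mul_left (n * sbar))
    · apply eFrac_congr
      have h1 : (m * b + n * b') * rbar = (m * rbar) * b + (n * rbar) * b' := by ring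
      rw [h1]
      exact (((hcongr (x₁, x₂)).2).mul_left (m * rbar)).add
        (((hcongr (y₁, y₂)).2).mul_left (n * rbar))
  · rw [if_neg (fun h => hq (hcond.mp h).2), if_neg hq, mul_zero]
  · rw [if_neg (fun h => hp (hcond.mp h).1), if_neg hp, zero_mul]
  · rw [if_neg (fun h => hp (hcond.mp h).1), if_neg hp, zero_mul]
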